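/- Let ε_r : ℝ³ → ℂ be Hölder-continuous and bounded, D ⊂ ℝ³ bounded with x_c ∈ interior of D, and λ = ε_r(x_c). Then lim_{α→∞} ‖(ε_r(·) − λ) Ψ(α,·,x_c)‖²_{L²(D)} = 0. -/

import Mathlib

open MeasureTheory Real Filter Topology

noncomputable def Psi (xc : EuclideanSpace ℝ (Fin 3)) (α : ℝ)
    (x : EuclideanSpace ℝ (Fin 3)) : EuclideanSpace ℝ (Fin 3) :=
  ((2 / 3 : ℝ) ^ ((1 : ℝ) / 2) * Real.pi ^ (-(3 : ℝ) / 4) * α ^ ((5 : ℝ) / 4) *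
    Real.exp (-(α / 2) * ‖x - xc‖ ^ 2)) • (x - xc)

lemma aux_rpow_exp_le (t p : ℝ) (ht : 0 ≤ t) (hp1 : 1 ≤ p) (hp2 : p ≤ 2) :
    t ^ p * Real.exp (-t) ≤ 4 := by
  rcases le_total t 1 with h | h
  · have h1 : t ^ p ≤ 1 := Real.rpow_le_one ht h (by linarith)
    have h2 : Real.exp (-t) ≤ 1 := Real.exp_le_one_iff.mpr (by linarith)
    nlinarith [Real.exp_pos (-t), Real.rpow_nonneg ht p]
  · have h1 : t ^ p ≤ t ^ (2:ℝ) := Real.rpow_le_rpow_of_exponent_le h hp2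
    have h2 : t ^ (2:ℝ) = t ^ 2 := Real.rpow_two t
    have h3 : t ^ 2 ≤ 4 * Real.exp t := by
      have h4 := Real.add_one_le_exp (t/2)
      have h5 : Real.exp t = Real.exp (t/2) * Real.exp (t/2) := by
        rw [← Real.exp_add]; ring_nf
      nlinarith [Real.exp_pos (t/2)]
    have h6 : Real.exp (-t) = (Real.exp t)⁻¹ := Real.exp_neg t
    rw [h6]
    calc t^p * (Real.exp t)⁻¹ ≤ (t^2 : ℝ) * (Real.exp t)⁻¹ := by
          rw [← h2]; gcongr
      _ ≤ 4 := by rw [mul_inv_le_iff₀ (Real.exp_pos t)]; linarith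

lemma gaussian_int_E3 {b : ℝ} (hb : 0 < b) :
    Integrable (fun x : EuclideanSpace ℝ (Fin 3) => Real.exp (-b * ‖x‖^2)) := by
  have h := (GaussianFourier.integrable_cexp_neg_mul_sq_norm_add
      (V := EuclideanSpace ℝ (Fin 3)) (b := (b : ℂ)) (by simpa using hb) 0
      (0 : EuclideanSpace ℝ (Fin 3))).norm
  convert h using 2 with x
  simp [Complex.norm_exp]
  norm_cast
  left; rfl

lemma gaussian_val_E3 {b : ℝ} (hb : 0 < b) :
    ∫ x : EuclideanSpace ℝ (Fin 3), Real.exp (-b * ‖x‖^2) = (Real.pi / b) ^ ((3:ℝ)/2) := by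
  rw [GaussianFourier.integral_rexp_neg_mul_sq_norm hb]
  norm_num [finrank_euclideanSpace_fin]

theorem essential_spectrum_first_term_vanishes
    (eps : EuclideanSpace ℝ (Fin 3) → ℂ)
    (hHolder : ∃ (C s : NNReal), 0 < s ∧ s ≤ 1 ∧ HolderWith C s eps)
    (hbdd : ∃ M : ℝ, ∀ x, ‖eps x‖ ≤ M)
    (D : Set (EuclideanSpace ℝ (Fin 3))) (hD : Bornology.IsBounded D)
    (hDm : MeasurableSet D)
    (xc : EuclideanSpace ℝ (Fin 3)) (hxc : xc ∈ interior D) :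
    Tendsto (fun α : ℝ =>
        ∫ x in D, ‖eps x - eps xc‖ ^ 2 * ‖Psi xc α x‖ ^ 2)
      atTop (𝓝 0) := by
  obtain ⟨C, s, hs0, hs1, hHol⟩ := hHolder
  have hsR : (0:ℝ) < s := hs0
  have hsR1 : (s:ℝ) ≤ 1 := hs1
  have heps : Continuous eps := hHol.continuous hs0
  set c0 : ℝ := (2 / 3 : ℝ) ^ ((1 : ℝ) / 2) * Real.pi ^ (-(3 : ℝ) / 4) with hc0
  have hc0nn : 0 ≤ c0 :=
    mul_nonneg (Real.rpow_nonneg (by norm_num) _) (Real.rpow_nonneg Real.pi_pos.le _)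
  set K : ℝ := (C:ℝ)^2 * c0^2 * 4 * (2:ℝ) ^ ((s:ℝ)+1) * (2*Real.pi) ^ ((3:ℝ)/2) with hK
  have h0 : ∀ᶠ α in atTop, 0 ≤ ∫ x in D,
      ‖eps x - eps xc‖ ^ 2 * ‖Psi xc α x‖ ^ 2 :=
    Eventually.of_forall (fun α => integral_nonneg (fun x => by positivity))
  have hbound : ∀ᶠ α in atTop, (∫ x in D,
      ‖eps x - eps xc‖ ^ 2 * ‖Psi xc α x‖ ^ 2) ≤ K * α ^ (-(s:ℝ)) := by
    filter_upwards [eventually_ge_atTop 1] with α hα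
    have hα0 : (0:ℝ) < α := lt_of_lt_of_le one_pos hα
    set A : ℝ := (C:ℝ)^2 * c0^2 * 4 * (2:ℝ) ^ ((s:ℝ)+1) * α ^ ((3:ℝ)/2 - (s:ℝ)) with hA
    have hAnn : 0 ≤ A := by
      apply mul_nonneg
      apply mul_nonneg
      · positivity
      · exact Real.rpow_nonneg (by norm_num) _
      · exact Real.rpow_nonneg hα0.le _
    -- pointwise bound
    have hpt : ∀ x, ‖eps x - eps xc‖ ^ 2 * ‖Psi xc α x‖ ^ 2 ≤
        A * Real.exp (-(α/2) * ‖x - xc‖^2) := by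
      intro x
      set r : ℝ := ‖x - xc‖ with hrdef
      have hr : 0 ≤ r := norm_nonneg _
      have h_eps : ‖eps x - eps xc‖ ≤ (C:ℝ) * r ^ (s:ℝ) := by
        have := hHol.dist_le x xc
        simpa [Complex.dist_eq, dist_eq_norm, hrdef] using this
      have hαp : 0 ≤ α ^ ((5:ℝ)/4) := Real.rpow_nonneg hα0.le _
      have hknn : 0 ≤ (2 / 3 : ℝ) ^ ((1 : ℝ) / 2) * Real.pi ^ (-(3 : ℝ) / 4) *
          α ^ ((5 : ℝ) / 4) * Real.exp (-(α / 2) * r ^ 2) :=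
        mul_nonneg (mul_nonneg hc0nn hαp) (Real.exp_nonneg _)
      have hk : ‖Psi xc α x‖ =
          (c0 * α ^ ((5:ℝ)/4) * Real.exp (-(α/2) * r^2)) * r := by
        simp only [Psi, norm_smul, Real.norm_eq_abs, ← hrdef]
        rw [abs_of_nonneg hknn, hc0]
      have hpsi_sq : ‖Psi xc α x‖^2 =
          c0^2 * α ^ ((5:ℝ)/2) * Real.exp (-α * r^2) * r^2 := by
        rw [hk]
        have e1 : (α ^ ((5:ℝ)/4))^2 = α ^ ((5:ℝ)/2) := by
          rw [← Real.rpow_natCast (α ^ ((5:ℝ)/4)) 2, ← Real.rpow_mul hα0.le]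
          norm_num
        have e2 : (Real.exp (-(α/2) * r^2))^2 = Real.exp (-α * r^2) := by
          rw [sq, ← Real.exp_add]; ring_nf
        calc (c0 * α ^ ((5:ℝ)/4) * Real.exp (-(α/2) * r^2) * r)^2
            = c0^2 * (α ^ ((5:ℝ)/4))^2 * (Real.exp (-(α/2) * r^2))^2 * r^2 := by ring
          _ = c0^2 * α ^ ((5:ℝ)/2) * Real.exp (-α * r^2) * r^2 := by rw [e1, e2]
      have hrs : ((r:ℝ) ^ (s:ℝ))^2 = r ^ ((2:ℝ)*(s:ℝ)) := by
        rw [← Real.rpow_natCast (r ^ (s:ℝ)) 2, ← Real.rpow_mul hr]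
        norm_num [mul_comm]
      -- key sup bound
      have key : r ^ ((2:ℝ)*(s:ℝ)) * r^2 * Real.exp (-(α/2) * r^2) ≤
          4 * (2/α) ^ ((s:ℝ)+1) := by
        set t : ℝ := (α/2) * r^2 with htdef
        have ht : 0 ≤ t := mul_nonneg (by positivity) (sq_nonneg r)
        have h1 : t ^ ((s:ℝ)+1) * Real.exp (-t) ≤ 4 :=
          aux_rpow_exp_le t _ ht (by linarith [hsR.le]) (by linarith)
        have h2 : t ^ ((s:ℝ)+1) = (α/2) ^ ((s:ℝ)+1) * (r ^ ((2:ℝ)*(s:ℝ)) * r^2) := by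
          rw [htdef, Real.mul_rpow (by positivity) (sq_nonneg r)]
          congr 1
          rw [← Real.rpow_natCast r 2, ← Real.rpow_mul hr,
            ← Real.rpow_add' hr (by positivity)]
          congr 1
          push_cast
          ring
        have h3 : (2/α) ^ ((s:ℝ)+1) * (α/2) ^ ((s:ℝ)+1) = 1 := by
          rw [← Real.mul_rpow (by positivity) (by positivity)]
          have : (2/α) * (α/2) = 1 := by field_simp
          rw [this, Real.one_rpow]
        have h4 : r ^ ((2:ℝ)*(s:ℝ)) * r^2 = (2/α) ^ ((s:ℝ)+1) * t ^ ((s:ℝ)+1) := by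
          rw [h2, ← mul_assoc, h3, one_mul]
        have hneg : -(α/2) * r ^ 2 = -t := by rw [htdef]; ring
        rw [h4, hneg, mul_assoc, mul_comm (4:ℝ)]
        exact mul_le_mul_of_nonneg_left h1 (Real.rpow_nonneg (by positivity) _)
      have hexp2 : Real.exp (-α * r^2) =
          Real.exp (-(α/2) * r^2) * Real.exp (-(α/2) * r^2) := by
        rw [← Real.exp_add]; ring_nf
      have hpow : α ^ ((5:ℝ)/2) * (4 * (2/α) ^ ((s:ℝ)+1)) =
          4 * (2:ℝ) ^ ((s:ℝ)+1) * α ^ ((3:ℝ)/2 - (s:ℝ)) := by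
        rw [Real.div_rpow (by norm_num : (0:ℝ) ≤ 2) hα0.le]
        have e3 : (3:ℝ)/2 - (s:ℝ) = 5/2 - ((s:ℝ)+1) := by ring
        rw [e3, Real.rpow_sub hα0]
        field_simp
      have hXnn : 0 ≤ (C:ℝ)^2 * c0^2 * α ^ ((5:ℝ)/2) := by
        apply mul_nonneg (by positivity) (Real.rpow_nonneg hα0.le _)
      calc ‖eps x - eps xc‖ ^ 2 * ‖Psi xc α x‖ ^ 2
          ≤ ((C:ℝ) * r ^ (s:ℝ))^2 * (c0^2 * α ^ ((5:ℝ)/2) * Real.exp (-α * r^2) * r^2) := by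
            rw [hpsi_sq]
            apply mul_le_mul_of_nonneg_right _ (by
              apply mul_nonneg _ (sq_nonneg r)
              apply mul_nonneg _ (Real.exp_nonneg _)
              exact mul_nonneg (sq_nonneg _) (Real.rpow_nonneg hα0.le _))
            exact pow_le_pow_left₀ (norm_nonneg _) h_eps 2
        _ = ((C:ℝ)^2 * c0^2 * α ^ ((5:ℝ)/2)) *
              ((r ^ ((2:ℝ)*(s:ℝ)) * r^2 * Real.exp (-(α/2) * r^2)) *
                Real.exp (-(α/2) * r^2)) := by
            rw [mul_pow, hrs, hexp2]; ring
        _ ≤ ((C:ℝ)^2 * c0^2 * α ^ ((5:ℝ)/2)) *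
              ((4 * (2/α) ^ ((s:ℝ)+1)) * Real.exp (-(α/2) * r^2)) := by
            apply mul_le_mul_of_nonneg_left _ hXnn
            exact mul_le_mul_of_nonneg_right key (Real.exp_nonneg _)
        _ = A * Real.exp (-(α/2) * r^2) := by
            rw [hA]
            have : (C:ℝ)^2 * c0^2 * α ^ ((5:ℝ)/2) * ((4 * (2/α) ^ ((s:ℝ)+1)) *
                Real.exp (-(α/2) * r^2)) =
                ((C:ℝ)^2 * c0^2) * (α ^ ((5:ℝ)/2) * (4 * (2/α) ^ ((s:ℝ)+1))) *
                Real.exp (-(α/2) * r^2) := by ring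
            rw [this, hpow]; ring
    -- integrability
    have hb2 : (0:ℝ) < α/2 := by positivity
    have hg0 : Integrable (fun x : EuclideanSpace ℝ (Fin 3) =>
        Real.exp (-(α/2) * ‖x‖^2)) := gaussian_int_E3 hb2
    have hg : Integrable (fun x : EuclideanSpace ℝ (Fin 3) =>
        A * Real.exp (-(α/2) * ‖x - xc‖^2)) := (hg0.comp_sub_right xc).const_mul A
    have hPsiC : Continuous (Psi xc α) := by
      unfold Psi; fun_prop
    have hf_cont : Continuous (fun x => ‖eps x - eps xc‖ ^ 2 *
        ‖Psi xc α x‖ ^ 2) :=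
      ((continuous_norm.comp (heps.sub continuous_const)).pow 2).mul
        (hPsiC.norm.pow 2)
    have hf_int : IntegrableOn (fun x => ‖eps x - eps xc‖ ^ 2 *
        ‖Psi xc α x‖ ^ 2) D := by
      apply Integrable.mono hg.integrableOn hf_cont.aestronglyMeasurable.restrict
      refine ae_of_all _ fun x => ?_
      have h1 : (0:ℝ) ≤ ‖eps x - eps xc‖ ^ 2 * ‖Psi xc α x‖ ^ 2 := by
        positivity
      have h3 : (0:ℝ) ≤ A * Real.exp (-(α/2) * ‖x - xc‖^2) :=
        mul_nonneg hAnn (Real.exp_nonneg _)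
      rw [Real.norm_eq_abs, Real.norm_eq_abs, abs_of_nonneg h1, abs_of_nonneg h3]
      exact hpt x
    -- chain of integral inequalities
    calc (∫ x in D, ‖eps x - eps xc‖ ^ 2 * ‖Psi xc α x‖ ^ 2)
        ≤ ∫ x in D, A * Real.exp (-(α/2) * ‖x - xc‖^2) :=
          setIntegral_mono_on hf_int hg.integrableOn hDm (fun x _ => hpt x)
      _ ≤ ∫ x : EuclideanSpace ℝ (Fin 3), A * Real.exp (-(α/2) * ‖x - xc‖^2) :=
          setIntegral_le_integral hg (ae_of_all _ fun x =>
            mul_nonneg hAnn (Real.exp_nonneg _))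
      _ = A * (Real.pi / (α/2)) ^ ((3:ℝ)/2) := by
          rw [MeasureTheory.integral_const_mul,
            integral_sub_right_eq_self (fun y => Real.exp (-(α/2) * ‖y‖^2)) xc,
            gaussian_val_E3 hb2]
      _ ≤ K * α ^ (-(s:ℝ)) := by
          apply le_of_eq
          have e4 : Real.pi / (α/2) = 2*Real.pi/α := by field_simp
          rw [e4, Real.div_rpow (by positivity) hα0.le]
          have e5 : α ^ ((3:ℝ)/2 - (s:ℝ)) / α ^ ((3:ℝ)/2) = α ^ (-(s:ℝ)) := by
            rw [← Real.rpow_sub hα0]; ring_nf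
          rw [hA, hK]
          calc (C:ℝ)^2 * c0^2 * 4 * (2:ℝ) ^ ((s:ℝ)+1) * α ^ ((3:ℝ)/2 - (s:ℝ)) *
                ((2*Real.pi) ^ ((3:ℝ)/2) / α ^ ((3:ℝ)/2))
              = (C:ℝ)^2 * c0^2 * 4 * (2:ℝ) ^ ((s:ℝ)+1) * (2*Real.pi) ^ ((3:ℝ)/2) *
                (α ^ ((3:ℝ)/2 - (s:ℝ)) / α ^ ((3:ℝ)/2)) := by ring
            _ = (C:ℝ)^2 * c0^2 * 4 * (2:ℝ) ^ ((s:ℝ)+1) * (2*Real.pi) ^ ((3:ℝ)/2) *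
                α ^ (-(s:ℝ)) := by rw [e5]
  have hlim : Tendsto (fun α : ℝ => K * α ^ (-(s:ℝ))) atTop (𝓝 0) := by
    have h := tendsto_rpow_neg_atTop hsR
    simpa using h.const_mul K
  exact squeeze_zero' h0 hbound hlim
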